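/- Let a ∈ (0,1], b ∈ ℝ, c > 0, α(k) = k^b exp(2c k^a), and ρ(s) = s log(s+2). Then there is a constant C such that for every sequence (x_k)_{k≥1} of reals with sup_k |x_k| ≤ 1 and every K ≥ 1: ρ(∑_{k=1}^K α(k)|x_k|²) ≤ C ∑_{k=1}^K ρ(α(k)) |x_k|². -/

import Mathlib

set_option maxHeartbeats 1000000

lemma rho_add_aux (u v : ℝ) (hu : 0 ≤ u) (hv : 0 ≤ v) :
    (u + v) * Real.log (u + v + 2) ≤
      u * Real.log (u + 2) + v + v * Real.log (u + v + 2) := by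
  have h2 : (0:ℝ) < u + 2 := by linarith
  have h3 : (0:ℝ) < u + v + 2 := by linarith
  have hlog : Real.log (u + v + 2) - Real.log (u + 2) ≤ v / (u + 2) := by
    rw [← Real.log_div (by positivity) (by positivity)]
    have := Real.log_le_sub_one_of_pos (x := (u + v + 2) / (u + 2)) (by positivity)
    have heq : (u + v + 2) / (u + 2) - 1 = v / (u + 2) := by field_simp; ring
    linarith [heq ▸ this]
  have hm : u * (Real.log (u + v + 2) - Real.log (u + 2)) ≤ u * (v / (u + 2)) :=
    mul_le_mul_of_nonneg_left hlog hu
  have : u * (v / (u + 2)) ≤ v := by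
    rw [mul_div_assoc'] ; rw [div_le_iff₀ h2]
    nlinarith
  nlinarith [hm, this]


lemma key_log (a b c : ℝ) (ha0 : 0 < a) (hc : 0 < c) :
    ∃ C₀ : ℝ, 0 < C₀ ∧ ∀ K : ℕ, 1 ≤ K →
      Real.log ((∑ k ∈ Finset.Icc 1 K, (k : ℝ) ^ b * Real.exp (2 * c * (k : ℝ) ^ a)) + 2)
        ≤ C₀ * Real.log ((K : ℝ) ^ b * Real.exp (2 * c * (K : ℝ) ^ a) + 2) := by
  set M : ℝ := (1 + |b|) / a + 2 * c with hM
  have hMpos : 0 < M := by positivity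
  set ε : ℝ := c * a / (|b| + 1) with hε
  have hεpos : 0 < ε := by positivity
  set D : ℝ := ((|b| + 1) / a) * |Real.log ε| with hD
  have hDpos : 0 ≤ D := by positivity
  have hlog2 : 0 < Real.log 2 := Real.log_pos (by norm_num)
  refine ⟨M / c + (Real.log 3 + (M / c) * D) / Real.log 2, by positivity, ?_⟩
  intro K hK
  have hK1 : (1:ℝ) ≤ (K:ℝ) := by exact_mod_cast hK
  have hKpos : (0:ℝ) < (K:ℝ) := by linarith
  have hKa1 : (1:ℝ) ≤ (K:ℝ) ^ a := Real.one_le_rpow hK1 ha0.le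
  have hKapos : (0:ℝ) < (K:ℝ) ^ a := by linarith
  -- upper bound on the sum
  have hsum : (∑ k ∈ Finset.Icc 1 K, (k : ℝ) ^ b * Real.exp (2 * c * (k : ℝ) ^ a))
      ≤ (K:ℝ) ^ (1 + |b|) * Real.exp (2 * c * (K:ℝ) ^ a) := by
    have h1 : ∀ k ∈ Finset.Icc 1 K, (k : ℝ) ^ b * Real.exp (2 * c * (k : ℝ) ^ a)
        ≤ (K:ℝ) ^ |b| * Real.exp (2 * c * (K:ℝ) ^ a) := by
      intro k hk
      simp only [Finset.mem_Icc] at hk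
      have hk1 : (1:ℝ) ≤ (k:ℝ) := by exact_mod_cast hk.1
      have hkK : (k:ℝ) ≤ (K:ℝ) := by exact_mod_cast hk.2
      have hb1 : (k:ℝ) ^ b ≤ (k:ℝ) ^ |b| :=
        Real.rpow_le_rpow_of_exponent_le hk1 (le_abs_self b)
      have hb2 : (k:ℝ) ^ |b| ≤ (K:ℝ) ^ |b| :=
        Real.rpow_le_rpow (by linarith) hkK (abs_nonneg b)
      have he : Real.exp (2 * c * (k:ℝ) ^ a) ≤ Real.exp (2 * c * (K:ℝ) ^ a) := by
        apply Real.exp_le_exp.mpr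
        have : (k:ℝ) ^ a ≤ (K:ℝ) ^ a := Real.rpow_le_rpow (by linarith) hkK ha0.le
        nlinarith
      have hkb : (0:ℝ) ≤ (k:ℝ) ^ b := (Real.rpow_pos_of_pos (by linarith) b).le
      calc (k : ℝ) ^ b * Real.exp (2 * c * (k : ℝ) ^ a)
          ≤ (K:ℝ) ^ |b| * Real.exp (2 * c * (k : ℝ) ^ a) := by
            exact mul_le_mul_of_nonneg_right (hb1.trans hb2) (Real.exp_pos _).le
        _ ≤ (K:ℝ) ^ |b| * Real.exp (2 * c * (K:ℝ) ^ a) :=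
            mul_le_mul_of_nonneg_left he (by positivity)
    calc (∑ k ∈ Finset.Icc 1 K, (k : ℝ) ^ b * Real.exp (2 * c * (k : ℝ) ^ a))
        ≤ (Finset.Icc 1 K).card • ((K:ℝ) ^ |b| * Real.exp (2 * c * (K:ℝ) ^ a)) :=
          Finset.sum_le_card_nsmul _ _ _ h1
      _ = (K:ℝ) * ((K:ℝ) ^ |b| * Real.exp (2 * c * (K:ℝ) ^ a)) := by
          rw [Nat.card_Icc]; simp [nsmul_eq_mul]
      _ = (K:ℝ) ^ (1 + |b|) * Real.exp (2 * c * (K:ℝ) ^ a) := by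
          rw [Real.rpow_add hKpos, Real.rpow_one]; ring
  set X : ℝ := (K:ℝ) ^ (1 + |b|) * Real.exp (2 * c * (K:ℝ) ^ a) with hX
  have hX1 : (1:ℝ) ≤ X := by
    have h1 : (1:ℝ) ≤ (K:ℝ) ^ (1 + |b|) := Real.one_le_rpow hK1 (by positivity)
    have h2 : (1:ℝ) ≤ Real.exp (2 * c * (K:ℝ) ^ a) := Real.one_le_exp (by positivity)
    nlinarith
  have hsum0 : (0:ℝ) ≤ ∑ k ∈ Finset.Icc 1 K, (k : ℝ) ^ b * Real.exp (2 * c * (k : ℝ) ^ a) := by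
    apply Finset.sum_nonneg; intro k hk; positivity
  -- log K bound:  log (K^a) ≤ K^a
  have hlogKa : Real.log ((K:ℝ)^a) = a * Real.log (K:ℝ) := Real.log_rpow hKpos a
  have hlogK : Real.log (K:ℝ) ≤ (K:ℝ)^a / a := by
    have := Real.log_le_sub_one_of_pos hKapos
    rw [hlogKa] at this
    rw [le_div_iff₀ ha0]; nlinarith
  have hlogK0 : 0 ≤ Real.log (K:ℝ) := Real.log_nonneg hK1
  -- upper bound on log (sum + 2)
  have hup : Real.log ((∑ k ∈ Finset.Icc 1 K, (k : ℝ) ^ b * Real.exp (2 * c * (k : ℝ) ^ a)) + 2)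
      ≤ Real.log 3 + M * (K:ℝ)^a := by
    have h1 : (∑ k ∈ Finset.Icc 1 K, (k : ℝ) ^ b * Real.exp (2 * c * (k : ℝ) ^ a)) + 2
        ≤ 3 * X := by nlinarith
    have h2 := Real.log_le_log (by positivity) h1
    have h3 : Real.log (3 * X) = Real.log 3 + Real.log X := by
      rw [Real.log_mul (by norm_num) (by positivity)]
    have h4 : Real.log X = (1 + |b|) * Real.log (K:ℝ) + 2 * c * (K:ℝ)^a := by
      rw [hX, Real.log_mul (by positivity) (by positivity), Real.log_rpow hKpos,
        Real.log_exp]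
    have h5 : (1 + |b|) * Real.log (K:ℝ) ≤ ((1 + |b|) / a) * (K:ℝ)^a := by
      have : (1 + |b|) * Real.log (K:ℝ) ≤ (1 + |b|) * ((K:ℝ)^a / a) :=
        mul_le_mul_of_nonneg_left hlogK (by positivity)
      calc (1 + |b|) * Real.log (K:ℝ) ≤ (1 + |b|) * ((K:ℝ)^a / a) := this
        _ = ((1 + |b|) / a) * (K:ℝ)^a := by ring
    have : Real.log X ≤ M * (K:ℝ)^a := by rw [h4, hM]; nlinarith
    linarith
  -- lower bound on log (α K + 2)
  set L : ℝ := Real.log ((K : ℝ) ^ b * Real.exp (2 * c * (K : ℝ) ^ a) + 2) with hL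
  have hαpos : (0:ℝ) < (K : ℝ) ^ b * Real.exp (2 * c * (K : ℝ) ^ a) := by positivity
  have hL2 : Real.log 2 ≤ L := Real.log_le_log (by norm_num) (by linarith)
  have hLα : b * Real.log (K:ℝ) + 2 * c * (K:ℝ)^a ≤ L := by
    have h1 : Real.log ((K : ℝ) ^ b * Real.exp (2 * c * (K : ℝ) ^ a))
        = b * Real.log (K:ℝ) + 2 * c * (K:ℝ)^a := by
      rw [Real.log_mul (by positivity) (by positivity), Real.log_rpow hKpos, Real.log_exp]
    rw [← h1]
    exact Real.log_le_log hαpos (by linarith)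
  -- |b| log K ≤ c K^a + D
  have habs : |b| * Real.log (K:ℝ) ≤ c * (K:ℝ)^a + D := by
    have h1 : Real.log (ε * (K:ℝ)^a) ≤ ε * (K:ℝ)^a - 1 :=
      Real.log_le_sub_one_of_pos (by positivity)
    have h2 : Real.log ((K:ℝ)^a) = Real.log (ε * (K:ℝ)^a) - Real.log ε := by
      rw [Real.log_mul (ne_of_gt hεpos) (ne_of_gt hKapos)]; ring
    have h3 : Real.log ((K:ℝ)^a) ≤ ε * (K:ℝ)^a + |Real.log ε| := by
      have := neg_abs_le (Real.log ε)
      linarith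
    have h4 : |b| * Real.log (K:ℝ) ≤ (|b| + 1) * Real.log (K:ℝ) := by nlinarith
    have h5 : (|b| + 1) * Real.log (K:ℝ) = ((|b| + 1) / a) * Real.log ((K:ℝ)^a) := by
      rw [hlogKa]; field_simp
    have h6 : ((|b| + 1) / a) * Real.log ((K:ℝ)^a)
        ≤ ((|b| + 1) / a) * (ε * (K:ℝ)^a + |Real.log ε|) :=
      mul_le_mul_of_nonneg_left h3 (by positivity)
    have hcoef : ((|b| + 1) / a) * ε = c := by
      rw [hε]; field_simp
    have h7 : ((|b| + 1) / a) * (ε * (K:ℝ)^a + |Real.log ε|) = c * (K:ℝ)^a + D := by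
      rw [hD, ← hcoef]; ring
    linarith [h5 ▸ h4, h7 ▸ h6]
  -- so c K^a ≤ L + D
  have hKaL : c * (K:ℝ)^a ≤ L + D := by
    have hb1 : -( |b| * Real.log (K:ℝ)) ≤ b * Real.log (K:ℝ) := by
      have := neg_abs_le b; nlinarith
    linarith
  -- conclude
  have hfin : Real.log 3 + M * (K:ℝ)^a ≤ (M / c + (Real.log 3 + (M / c) * D) / Real.log 2) * L := by
    have h1 : M * (K:ℝ)^a ≤ (M / c) * (L + D) := by
      have : M * (K:ℝ)^a = (M / c) * (c * (K:ℝ)^a) := by field_simp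
      rw [this]
      exact mul_le_mul_of_nonneg_left hKaL (by positivity)
    have h2 : Real.log 3 + (M / c) * D ≤ ((Real.log 3 + (M / c) * D) / Real.log 2) * L := by
      have hXn : 0 ≤ Real.log 3 + (M / c) * D := by
        positivity
      calc Real.log 3 + (M / c) * D
          = ((Real.log 3 + (M / c) * D) / Real.log 2) * Real.log 2 := by
            field_simp
        _ ≤ ((Real.log 3 + (M / c) * D) / Real.log 2) * L :=
            mul_le_mul_of_nonneg_left hL2 (by positivity)
    nlinarith
  exact le_trans hup hfin

lemma main_aux (α : ℕ → ℝ) (hαpos : ∀ k : ℕ, 1 ≤ k → 0 < α k)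
    (C₀ : ℝ) (hC₀ : 0 < C₀)
    (hkey : ∀ K : ℕ, 1 ≤ K →
      Real.log ((∑ k ∈ Finset.Icc 1 K, α k) + 2) ≤ C₀ * Real.log (α K + 2))
    (x : ℕ → ℝ) (hx2 : ∀ k, (x k) ^ 2 ≤ 1) (K : ℕ) :
    (∑ k ∈ Finset.Icc 1 K, α k * (x k) ^ 2) *
        Real.log ((∑ k ∈ Finset.Icc 1 K, α k * (x k) ^ 2) + 2)
      ≤ (C₀ + 1 / Real.log 2) *
          ∑ k ∈ Finset.Icc 1 K, (α k * Real.log (α k + 2)) * (x k) ^ 2 := by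
  have hlog2 : 0 < Real.log 2 := Real.log_pos (by norm_num)
  induction K with
  | zero => simp
  | succ K ih =>
    set u : ℝ := ∑ k ∈ Finset.Icc 1 K, α k * (x k) ^ 2 with hu
    have hu0 : 0 ≤ u := by
      apply Finset.sum_nonneg
      intro k hk
      simp only [Finset.mem_Icc] at hk
      exact mul_nonneg (hαpos k hk.1).le (sq_nonneg _)
    set v : ℝ := α (K + 1) * (x (K + 1)) ^ 2 with hv
    have hαK1 : 0 < α (K + 1) := hαpos (K + 1) (Nat.le_add_left 1 K)
    have hv0 : 0 ≤ v := mul_nonneg hαK1.le (sq_nonneg _)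
    have hsplit : ∀ f : ℕ → ℝ, ∑ k ∈ Finset.Icc 1 (K + 1), f k
        = (∑ k ∈ Finset.Icc 1 K, f k) + f (K + 1) := by
      intro f
      exact Finset.sum_Icc_succ_top (Nat.le_add_left 1 K) f
    rw [hsplit (fun k => α k * (x k) ^ 2),
      hsplit (fun k => (α k * Real.log (α k + 2)) * (x k) ^ 2)]
    have hstep := rho_add_aux u v hu0 hv0
    have huv : u + v ≤ ∑ k ∈ Finset.Icc 1 (K + 1), α k := by
      rw [hu, hv, ← hsplit (fun k => α k * (x k) ^ 2)]
      apply Finset.sum_le_sum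
      intro k hk
      simp only [Finset.mem_Icc] at hk
      nlinarith [hαpos k hk.1, hx2 k, sq_nonneg (x k)]
    have hlogmono : Real.log (u + v + 2) ≤ Real.log ((∑ k ∈ Finset.Icc 1 (K + 1), α k) + 2) :=
      Real.log_le_log (by linarith) (by linarith)
    have hkeyK := hkey (K + 1) (Nat.le_add_left 1 K)
    set L : ℝ := Real.log (α (K + 1) + 2) with hLdef
    have hL2 : Real.log 2 ≤ L := Real.log_le_log (by norm_num) (by linarith)
    have hvL : v * Real.log (u + v + 2) ≤ C₀ * (L * v) := by
      have h1 : Real.log (u + v + 2) ≤ C₀ * L := le_trans hlogmono hkeyK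
      nlinarith
    have hv1 : v ≤ 1 / Real.log 2 * (L * v) := by
      have h : Real.log 2 * v ≤ L * v := mul_le_mul_of_nonneg_right hL2 hv0
      calc v = 1 / Real.log 2 * (Real.log 2 * v) := by field_simp
        _ ≤ 1 / Real.log 2 * (L * v) := mul_le_mul_of_nonneg_left h (by positivity)
    have hLv : L * v = (α (K + 1) * Real.log (α (K + 1) + 2)) * (x (K + 1)) ^ 2 := by
      rw [hLdef, hv]; ring
    calc (u + v) * Real.log (u + v + 2)
        ≤ u * Real.log (u + 2) + v + v * Real.log (u + v + 2) := hstep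
      _ ≤ (C₀ + 1 / Real.log 2) * (∑ k ∈ Finset.Icc 1 K, (α k * Real.log (α k + 2)) * (x k) ^ 2)
            + 1 / Real.log 2 * (L * v) + C₀ * (L * v) := by linarith
      _ = (C₀ + 1 / Real.log 2) *
            ((∑ k ∈ Finset.Icc 1 K, (α k * Real.log (α k + 2)) * (x k) ^ 2)
              + (α (K + 1) * Real.log (α (K + 1) + 2)) * (x (K + 1)) ^ 2) := by
          rw [← hLv]; ring



/-- Interpolation-type inequality for the convex Zygmund function `ρ(s)=s log(s+2)` applied to
weighted square sums with weights `α(k) = k^b exp(2c k^a)`: there is a constant `C` such that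
for every sequence with `sup_k |x_k| ≤ 1` and every `K ≥ 1`,
`ρ(∑_{k=1}^K α(k) x_k²) ≤ C ∑_{k=1}^K ρ(α(k)) x_k²`. -/
theorem rho_weighted_sum_le (a b c : ℝ) (ha0 : 0 < a) (ha1 : a ≤ 1) (hc : 0 < c) :
    ∃ C : ℝ, 0 < C ∧ ∀ x : ℕ → ℝ, (∀ k, |x k| ≤ 1) → ∀ K : ℕ, 1 ≤ K →
      (∑ k ∈ Finset.Icc 1 K, ((k : ℝ) ^ b * Real.exp (2 * c * (k : ℝ) ^ a)) * (x k) ^ 2) *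
          Real.log ((∑ k ∈ Finset.Icc 1 K,
            ((k : ℝ) ^ b * Real.exp (2 * c * (k : ℝ) ^ a)) * (x k) ^ 2) + 2)
        ≤ C * ∑ k ∈ Finset.Icc 1 K,
            (((k : ℝ) ^ b * Real.exp (2 * c * (k : ℝ) ^ a)) *
              Real.log (((k : ℝ) ^ b * Real.exp (2 * c * (k : ℝ) ^ a)) + 2)) * (x k) ^ 2 := by
  obtain ⟨C₀, hC₀, hkey⟩ := key_log a b c ha0 hc
  have hlog2 : 0 < Real.log 2 := Real.log_pos (by norm_num)
  refine ⟨C₀ + 1 / Real.log 2, by positivity, ?_⟩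
  intro x hx K hK
  have hαpos : ∀ k : ℕ, 1 ≤ k → 0 < (k : ℝ) ^ b * Real.exp (2 * c * (k : ℝ) ^ a) := by
    intro k hk
    have : (0:ℝ) < (k:ℝ) := by exact_mod_cast hk
    positivity
  have hx2 : ∀ k, (x k) ^ 2 ≤ 1 := by
    intro k
    have := hx k
    nlinarith [abs_nonneg (x k), sq_abs (x k)]
  exact main_aux (fun k => (k : ℝ) ^ b * Real.exp (2 * c * (k : ℝ) ^ a)) hαpos C₀ hC₀
    hkey x hx2 K
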